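/- Let α : Mat_n(ℂ) → Mat_m(ℂ) be a completely positive unital map and φ a faithful state on Mat_m(ℂ). Then there is a unique completely positive unital map α' : Mat_m(ℂ) → Mat_n(ℂ) (the φ-transpose of α) satisfying ⟨α(x), y⟩_φ = ⟨α'(y), x⟩_ψ for all x ∈ Mat_n(ℂ), y ∈ Mat_m(ℂ), where ψ = φ ∘ α and ⟨a, b⟩_ω = Tr(ρ_ω^{1/2} a ρ_ω^{1/2} b) with ρ_ω the density matrix of the state ω. -/

import Mathlib

open Matrix
open scoped ComplexOrder

/-- The positive semidefinite square root of a positive semidefinite matrix, as it was defined in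
Mathlib (`Matrix.PosSemidef.sqrt`, since removed). -/
noncomputable def Matrix.PosSemidef.sqrt {n 𝕜 : Type*} [Fintype n] [DecidableEq n] [RCLike 𝕜]
    {A : Matrix n n 𝕜} (hA : A.PosSemidef) : Matrix n n 𝕜 :=
  (hA.1.eigenvectorUnitary : Matrix n n 𝕜) *
    diagonal ((↑) ∘ (Real.sqrt ·) ∘ hA.1.eigenvalues) *
    (star hA.1.eigenvectorUnitary : Matrix n n 𝕜)

lemma Matrix.PosSemidef.posSemidef_sqrt {n 𝕜 : Type*} [Fintype n] [DecidableEq n] [RCLike 𝕜]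
    {A : Matrix n n 𝕜} (hA : A.PosSemidef) : hA.sqrt.PosSemidef := by
  unfold Matrix.PosSemidef.sqrt
  have hd : (diagonal ((↑) ∘ (Real.sqrt ·) ∘ hA.1.eigenvalues : n → 𝕜)).PosSemidef :=
    posSemidef_diagonal_iff.mpr fun i => RCLike.ofReal_nonneg.mpr (Real.sqrt_nonneg _)
  exact hd.mul_mul_conjTranspose_same (hA.1.eigenvectorUnitary : Matrix n n 𝕜)

lemma Matrix.PosSemidef.sqrt_mul_self {n 𝕜 : Type*} [Fintype n] [DecidableEq n] [RCLike 𝕜]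
    {A : Matrix n n 𝕜} (hA : A.PosSemidef) : hA.sqrt * hA.sqrt = A := by
  unfold Matrix.PosSemidef.sqrt
  have hU : (star hA.1.eigenvectorUnitary : Matrix n n 𝕜) * hA.1.eigenvectorUnitary = 1 :=
    Unitary.coe_star_mul_self _
  have hD : diagonal ((↑) ∘ (Real.sqrt ·) ∘ hA.1.eigenvalues : n → 𝕜) *
      diagonal ((↑) ∘ (Real.sqrt ·) ∘ hA.1.eigenvalues : n → 𝕜) =
        diagonal (RCLike.ofReal ∘ hA.1.eigenvalues : n → 𝕜) := by
    rw [diagonal_mul_diagonal]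
    congr 1
    funext i
    simp only [Function.comp]
    rw [← RCLike.ofReal_mul, Real.mul_self_sqrt (hA.eigenvalues_nonneg i)]
  conv_rhs => rw [hA.1.spectral_theorem, Unitary.conjStarAlgAut_apply]
  rw [show ∀ a b c : Matrix n n 𝕜, a * b * c * (a * b * c) = a * (b * (c * a) * b) * c by
    intro a b c; simp only [mul_assoc], hU, mul_one, hD]

/-- Complete positivity for a linear map between matrix algebras: for every `k`, the
amplified map preserves positive semidefiniteness. -/
def IsCompletelyPositiveM {n m : ℕ}
    (α : Matrix (Fin n) (Fin n) ℂ →ₗ[ℂ] Matrix (Fin m) (Fin m) ℂ) : Prop :=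
  ∀ (k : ℕ) (M : Matrix (Fin k × Fin n) (Fin k × Fin n) ℂ), M.PosSemidef →
    (Matrix.of fun p q : Fin k × Fin m =>
      α (Matrix.of fun a b => M (p.1, a) (q.1, b)) p.2 q.2).PosSemidef

namespace TransposeAux

variable {p q r : ℕ}

lemma trace_stdBasisMatrix_mul (a b : Fin p) (M : Matrix (Fin p) (Fin p) ℂ) :
    (single a b 1 * M).trace = M b a := by
  simp [Matrix.trace, Matrix.diag, Matrix.mul_apply, Matrix.single, ite_and]

lemma eq_of_forall_trace_mul_eq {A B : Matrix (Fin p) (Fin p) ℂ}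
    (h : ∀ x, (A * x).trace = (B * x).trace) : A = B := by
  ext a b
  have h1 := h (single b a 1)
  rwa [trace_mul_comm, trace_stdBasisMatrix_mul, trace_mul_comm,
    trace_stdBasisMatrix_mul] at h1

/-- The adjoint of a linear map of matrix algebras with respect to the trace pairing. -/
noncomputable def adjMap (α : Matrix (Fin p) (Fin p) ℂ →ₗ[ℂ] Matrix (Fin q) (Fin q) ℂ) :
    Matrix (Fin q) (Fin q) ℂ →ₗ[ℂ] Matrix (Fin p) (Fin p) ℂ where
  toFun y := Matrix.of fun a b => (α (single b a 1) * y).trace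
  map_add' y z := by ext a b; simp [Matrix.mul_add]
  map_smul' c y := by ext a b; simp [Matrix.mul_smul]

lemma adj_spec (α : Matrix (Fin p) (Fin p) ℂ →ₗ[ℂ] Matrix (Fin q) (Fin q) ℂ)
    (x : Matrix (Fin p) (Fin p) ℂ) (y : Matrix (Fin q) (Fin q) ℂ) :
    (α x * y).trace = (x * adjMap α y).trace := by
  nth_rewrite 1 [Matrix.matrix_eq_sum_single x]
  nth_rewrite 2 [Matrix.matrix_eq_sum_single x]
  simp only [map_sum, Finset.sum_mul, trace_sum]
  refine Finset.sum_congr rfl fun a _ => Finset.sum_congr rfl fun b _ => ?_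
  have h1 : single a b (x a b) = (x a b) • single a b (1:ℂ) := by
    rw [smul_single, smul_eq_mul, mul_one]
  rw [h1, _root_.map_smul, smul_mul, trace_smul, smul_mul, trace_smul,
    trace_stdBasisMatrix_mul]
  simp [adjMap]

/-- The Choi matrix of a linear map of matrix algebras. -/
def choi (β : Matrix (Fin p) (Fin p) ℂ →ₗ[ℂ] Matrix (Fin q) (Fin q) ℂ) :
    Matrix (Fin p × Fin q) (Fin p × Fin q) ℂ :=
  Matrix.of fun u v => β (single u.1 v.1 1) u.2 v.2

lemma apply_eq_sum_choi (β : Matrix (Fin p) (Fin p) ℂ →ₗ[ℂ] Matrix (Fin q) (Fin q) ℂ)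
    (x : Matrix (Fin p) (Fin p) ℂ) (i j : Fin q) :
    β x i j = ∑ a, ∑ b, x a b * choi β (a, i) (b, j) := by
  nth_rewrite 1 [Matrix.matrix_eq_sum_single x]
  rw [map_sum, Matrix.sum_apply]
  refine Finset.sum_congr rfl fun a _ => ?_
  rw [map_sum, Matrix.sum_apply]
  refine Finset.sum_congr rfl fun b _ => ?_
  have h1 : single a b (x a b) = (x a b) • single a b (1:ℂ) := by
    rw [smul_single, smul_eq_mul, mul_one]
  rw [h1, _root_.map_smul]
  simp [choi]

lemma hermitian_sq_entry {ι : Type*} [Fintype ι] {A Q : Matrix ι ι ℂ} (hQ : Qᴴ = Q)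
    (hA : Q * Q = A) (x y : ι) : A x y = ∑ u, star (Q u x) * Q u y := by
  subst hA
  rw [Matrix.mul_apply]
  refine Finset.sum_congr rfl fun u _ => ?_
  congr 1
  conv_lhs => rw [← hQ]
  exact Matrix.conjTranspose_apply Q u x

lemma sum4 {ι₁ ι₂ ι₃ ι₄ : Type*} [Fintype ι₁] [Fintype ι₂] [Fintype ι₃] [Fintype ι₄]
    (f : ι₁ → ι₂ → ι₃ → ι₄ → ℂ) :
    (∑ a, ∑ b, ∑ u, ∑ v, f a b u v) = ∑ u, ∑ v, ∑ a, ∑ b, f a b u v := by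
  calc (∑ a, ∑ b, ∑ u, ∑ v, f a b u v)
      = ∑ a, ∑ u, ∑ b, ∑ v, f a b u v :=
        Finset.sum_congr rfl fun a _ => Finset.sum_comm
    _ = ∑ u, ∑ a, ∑ b, ∑ v, f a b u v := Finset.sum_comm
    _ = ∑ u, ∑ a, ∑ v, ∑ b, f a b u v :=
        Finset.sum_congr rfl fun u _ => Finset.sum_congr rfl fun a _ => Finset.sum_comm
    _ = ∑ u, ∑ v, ∑ a, ∑ b, f a b u v :=
        Finset.sum_congr rfl fun u _ => Finset.sum_comm

/-- A map whose Choi matrix is positive semidefinite is completely positive. -/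
lemma isCP_of_choi_posSemidef (β : Matrix (Fin p) (Fin p) ℂ →ₗ[ℂ] Matrix (Fin q) (Fin q) ℂ)
    (hc : (choi β).PosSemidef) : IsCompletelyPositiveM β := by
  intro k M hM
  set Q := hM.sqrt with hQdef
  set D := hc.sqrt with hDdef
  have hQ : Qᴴ = Q := hM.posSemidef_sqrt.1
  have hD : Dᴴ = D := hc.posSemidef_sqrt.1
  have hM2 : Q * Q = M := hM.sqrt_mul_self
  have hC2 : D * D = choi β := hc.sqrt_mul_self
  set F : Matrix ((Fin k × Fin p) × (Fin p × Fin q)) (Fin k × Fin q) ℂ :=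
    Matrix.of (fun w tj => ∑ b, Q w.1 (tj.1, b) * D w.2 (b, tj.2)) with hF
  have key : (Matrix.of fun u v : Fin k × Fin q =>
      β (Matrix.of fun a b => M (u.1, a) (v.1, b)) u.2 v.2) = Fᴴ * F := by
    ext ⟨s, i⟩ ⟨t, j⟩
    rw [Matrix.of_apply, apply_eq_sum_choi, Matrix.mul_apply]
    rw [Fintype.sum_prod_type]
    simp only [Matrix.of_apply, Matrix.conjTranspose_apply]
    calc (∑ a, ∑ b, M ((s, i).1, a) ((t, j).1, b) * choi β (a, (s, i).2) (b, (t, j).2))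
        = ∑ a, ∑ b, (∑ u, star (Q u (s, a)) * Q u (t, b)) *
            (∑ v, star (D v (a, i)) * D v (b, j)) := by
          refine Finset.sum_congr rfl fun a _ => Finset.sum_congr rfl fun b _ => ?_
          rw [← hermitian_sq_entry hQ hM2, ← hermitian_sq_entry hD hC2]
      _ = ∑ a, ∑ b, ∑ u, ∑ v, (star (Q u (s, a)) * Q u (t, b)) *
            (star (D v (a, i)) * D v (b, j)) := by
          refine Finset.sum_congr rfl fun a _ => Finset.sum_congr rfl fun b _ => ?_
          rw [Finset.sum_mul_sum]
      _ = ∑ u, ∑ v, ∑ a, ∑ b, (star (Q u (s, a)) * Q u (t, b)) *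
            (star (D v (a, i)) * D v (b, j)) := sum4 _
      _ = ∑ u, ∑ v, star (F (u, v) (s, i)) * F (u, v) (t, j) := by
          refine Finset.sum_congr rfl fun u _ => Finset.sum_congr rfl fun v _ => ?_
          simp only [hF, Matrix.of_apply, star_sum, star_mul', Finset.sum_mul_sum]
          refine Finset.sum_congr rfl fun a _ => Finset.sum_congr rfl fun b _ => ?_
          ring
  rw [key]
  exact Matrix.posSemidef_conjTranspose_mul_self F

/-- The Choi matrix of a completely positive map is positive semidefinite. -/
lemma choi_posSemidef_of_isCP (α : Matrix (Fin p) (Fin p) ℂ →ₗ[ℂ] Matrix (Fin q) (Fin q) ℂ)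
    (h : IsCompletelyPositiveM α) : (choi α).PosSemidef := by
  set w : Matrix (Fin 1) (Fin p × Fin p) ℂ :=
    Matrix.of fun _ u => if u.1 = u.2 then 1 else 0 with hw
  have hM : (wᴴ * w).PosSemidef := Matrix.posSemidef_conjTranspose_mul_self w
  have h2 := h p _ hM
  have key : (Matrix.of fun u v : Fin p × Fin q =>
      α (Matrix.of fun a b => (wᴴ * w) (u.1, a) (v.1, b)) u.2 v.2) = choi α := by
    ext ⟨s, i⟩ ⟨t, j⟩
    have harg : (Matrix.of fun a b => (wᴴ * w) ((s, i).1, a) ((t, j).1, b)) =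
        single s t (1 : ℂ) := by
      ext a b
      simp only [hw, Matrix.mul_apply, Matrix.single, ite_and, eq_comm,
        Matrix.of_apply, Matrix.conjTranspose_apply]
      by_cases h1 : s = a <;> by_cases h2 : t = b <;> simp [h1, h2]
    show α _ i j = α _ i j
    rw [harg]
  rwa [key] at h2

lemma choi_adjMap (α : Matrix (Fin p) (Fin p) ℂ →ₗ[ℂ] Matrix (Fin q) (Fin q) ℂ) :
    choi (adjMap α) =
      ((choi α)ᵀ).submatrix (Equiv.prodComm (Fin q) (Fin p)) (Equiv.prodComm (Fin q) (Fin p)) := by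
  ext ⟨i, a⟩ ⟨j, b⟩
  show (α (single b a 1) * single i j 1).trace = _
  rw [trace_mul_comm, trace_stdBasisMatrix_mul]
  rfl

lemma isCP_adjMap (α : Matrix (Fin p) (Fin p) ℂ →ₗ[ℂ] Matrix (Fin q) (Fin q) ℂ)
    (h : IsCompletelyPositiveM α) : IsCompletelyPositiveM (adjMap α) := by
  apply isCP_of_choi_posSemidef
  rw [choi_adjMap]
  exact ((choi_posSemidef_of_isCP α h).transpose).submatrix _

/-- Conjugation by a fixed matrix, as a linear map. -/
noncomputable def conjLin (A : Matrix (Fin p) (Fin p) ℂ) :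
    Matrix (Fin p) (Fin p) ℂ →ₗ[ℂ] Matrix (Fin p) (Fin p) ℂ where
  toFun x := A * x * Aᴴ
  map_add' x y := by simp [Matrix.mul_add, Matrix.add_mul]
  map_smul' c x := by simp [Matrix.mul_smul, Matrix.smul_mul]

@[simp] lemma conjLin_apply (A x : Matrix (Fin p) (Fin p) ℂ) :
    conjLin A x = A * x * Aᴴ := rfl

lemma isCP_conjLin (A : Matrix (Fin p) (Fin p) ℂ) : IsCompletelyPositiveM (conjLin A) := by
  intro k M hM
  set G : Matrix (Fin k × Fin p) (Fin k × Fin p) ℂ :=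
    Matrix.of fun u v => if u.1 = v.1 then A u.2 v.2 else 0 with hG
  have key : (Matrix.of fun u v : Fin k × Fin p =>
      conjLin A (Matrix.of fun a b => M (u.1, a) (v.1, b)) u.2 v.2) = G * M * Gᴴ := by
    ext ⟨s, i⟩ ⟨t, j⟩
    show (A * (Matrix.of fun a b => M (s, a) (t, b)) * Aᴴ) i j = (G * M * Gᴴ) (s, i) (t, j)
    simp only [Matrix.mul_apply, Matrix.conjTranspose_apply, Matrix.of_apply,
      Fintype.sum_prod_type, ite_mul, zero_mul, mul_ite, mul_zero,
      apply_ite (star : ℂ → ℂ), star_zero, Finset.sum_ite_eq, Finset.sum_ite_eq',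
      Finset.mem_univ, if_true, hG]
    simp only [Finset.sum_mul, Finset.mul_sum, ite_mul, zero_mul, Finset.sum_const_zero,
      Finset.sum_ite_irrel, Finset.sum_ite_eq, Finset.sum_ite_eq', Finset.mem_univ, if_true]
  rw [key]
  exact hM.mul_mul_conjTranspose_same G

lemma isCP_comp {γ : Matrix (Fin p) (Fin p) ℂ →ₗ[ℂ] Matrix (Fin q) (Fin q) ℂ}
    {β : Matrix (Fin q) (Fin q) ℂ →ₗ[ℂ] Matrix (Fin r) (Fin r) ℂ}
    (hγ : IsCompletelyPositiveM γ) (hβ : IsCompletelyPositiveM β) :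
    IsCompletelyPositiveM (β ∘ₗ γ) := by
  intro k M hM
  have h2 := hβ k _ (hγ k M hM)
  have key : (Matrix.of fun u v : Fin k × Fin r =>
      β (Matrix.of fun a b =>
        (Matrix.of fun s t : Fin k × Fin q =>
          γ (Matrix.of fun a b => M (s.1, a) (t.1, b)) s.2 t.2) (u.1, a) (v.1, b)) u.2 v.2)
      = (Matrix.of fun u v : Fin k × Fin r =>
        (β ∘ₗ γ) (Matrix.of fun a b => M (u.1, a) (v.1, b)) u.2 v.2) := by
    ext u v
    simp only [Matrix.of_apply, LinearMap.comp_apply]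
    rfl
  rwa [key] at h2

end TransposeAux

open TransposeAux in
/-- Existence and uniqueness of the `φ`-transpose of a completely positive unital map
`α : Mat_n(ℂ) → Mat_m(ℂ)`: with `φ` faithful of density matrix `Rφ`, `ψ = φ ∘ α` of density
matrix `S`, there is a unique completely positive unital `α' : Mat_m(ℂ) → Mat_n(ℂ)` with
`⟨α(x), y⟩_φ = ⟨α'(y), x⟩_ψ`, where `⟨a, b⟩_ω = Tr(ρ_ω^{1/2} a ρ_ω^{1/2} b)`. -/
theorem transpose_channel_exists_unique {n m : ℕ}
    (α : Matrix (Fin n) (Fin n) ℂ →ₗ[ℂ] Matrix (Fin m) (Fin m) ℂ)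
    (hunital : α 1 = 1) (hCP : IsCompletelyPositiveM α)
    {Rφ : Matrix (Fin m) (Fin m) ℂ} (hRφ : Rφ.PosDef) (hRφt : Rφ.trace = 1)
    {S : Matrix (Fin n) (Fin n) ℂ} (hS : S.PosDef) (hSt : S.trace = 1)
    (hdens : ∀ x : Matrix (Fin n) (Fin n) ℂ, (S * x).trace = (Rφ * α x).trace) :
    ∃! α' : Matrix (Fin m) (Fin m) ℂ →ₗ[ℂ] Matrix (Fin n) (Fin n) ℂ,
      (α' 1 = 1 ∧ IsCompletelyPositiveM α') ∧
      ∀ (x : Matrix (Fin n) (Fin n) ℂ) (y : Matrix (Fin m) (Fin m) ℂ),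
        (hRφ.posSemidef.sqrt * α x * hRφ.posSemidef.sqrt * y).trace =
          (hS.posSemidef.sqrt * α' y * hS.posSemidef.sqrt * x).trace := by
  classical
  set R := hRφ.posSemidef.sqrt with hRdef
  set T := hS.posSemidef.sqrt with hTdef
  have hRH : Rᴴ = R := hRφ.posSemidef.posSemidef_sqrt.1
  have hTH : Tᴴ = T := hS.posSemidef.posSemidef_sqrt.1
  have hR2 : R * R = Rφ := hRφ.posSemidef.sqrt_mul_self
  have hT2 : T * T = S := hS.posSemidef.sqrt_mul_self
  have hTdet : IsUnit T.det := by
    have hSu : IsUnit S.det := hS.det_pos.ne'.isUnit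
    rw [← hT2, Matrix.det_mul] at hSu
    exact isUnit_of_mul_isUnit_left hSu
  have hTiT : T⁻¹ * T = 1 := Matrix.nonsing_inv_mul T hTdet
  have hTTi : T * T⁻¹ = 1 := Matrix.mul_nonsing_inv T hTdet
  have hTiH : (T⁻¹)ᴴ = T⁻¹ := by rw [Matrix.conjTranspose_nonsing_inv, hTH]
  set α' := (conjLin (T⁻¹)) ∘ₗ ((adjMap α) ∘ₗ (conjLin R)) with hα'def
  have hα'app : ∀ y, α' y = T⁻¹ * adjMap α (R * y * R) * T⁻¹ := by
    intro y
    simp only [hα'def, LinearMap.comp_apply, conjLin_apply, hRH, hTiH]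
  have hadjRφ : adjMap α Rφ = S := by
    apply eq_of_forall_trace_mul_eq
    intro x
    calc (adjMap α Rφ * x).trace = (x * adjMap α Rφ).trace := trace_mul_comm _ _
      _ = (α x * Rφ).trace := (adj_spec α x Rφ).symm
      _ = (Rφ * α x).trace := trace_mul_comm _ _
      _ = (S * x).trace := (hdens x).symm
  have hpair : ∀ (x : Matrix (Fin n) (Fin n) ℂ) (y : Matrix (Fin m) (Fin m) ℂ),
      (R * α x * R * y).trace = (T * α' y * T * x).trace := by
    intro x y
    rw [hα'app]
    rw [show T * (T⁻¹ * adjMap α (R * y * R) * T⁻¹) * T =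
        (T * T⁻¹) * adjMap α (R * y * R) * (T⁻¹ * T) by noncomm_ring,
      hTTi, hTiT, one_mul, mul_one]
    rw [show R * α x * R * y = R * (α x * R * y) by noncomm_ring,
      trace_mul_comm R (α x * R * y),
      show α x * R * y * R = α x * (R * y * R) by noncomm_ring,
      adj_spec, trace_mul_comm]
  refine ⟨α', ⟨⟨?_, ?_⟩, hpair⟩, ?_⟩
  · -- unital
    rw [hα'app, Matrix.mul_one, hR2, hadjRφ, ← hT2,
      show T⁻¹ * (T * T) * T⁻¹ = (T⁻¹ * T) * (T * T⁻¹) by noncomm_ring,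
      hTiT, hTTi, one_mul]
  · -- completely positive
    exact isCP_comp (isCP_comp (isCP_conjLin R) (isCP_adjMap α hCP)) (isCP_conjLin (T⁻¹))
  · -- uniqueness
    intro β ⟨⟨_, _⟩, hβpair⟩
    apply LinearMap.ext
    intro y
    have heq : T * β y * T = T * α' y * T :=
      eq_of_forall_trace_mul_eq fun x => by
        rw [show T * β y * T * x = T * β y * T * x from rfl]
        exact ((hβpair x y).symm.trans (hpair x y))
    calc β y = (T⁻¹ * T) * β y * (T * T⁻¹) := by rw [hTiT, hTTi, one_mul, mul_one]
      _ = T⁻¹ * (T * β y * T) * T⁻¹ := by noncomm_ring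
      _ = T⁻¹ * (T * α' y * T) * T⁻¹ := by rw [heq]
      _ = (T⁻¹ * T) * α' y * (T * T⁻¹) := by noncomm_ring
      _ = α' y := by rw [hTiT, hTTi, one_mul, mul_one]
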